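/- Let n, d ≥ 1, let X be an n×d real matrix with rows x¹, …, xⁿ ∈ ℝ^d, let ρ > 0, and let v ∈ ℝ^d with ‖v‖₂ = 1. Then the infimum over all n×d real matrices E with ‖E‖_{2→∞} ≤ ρ of (1/n)·‖X.mulVec v + E.mulVec v‖₂² equals (1/n)·Σ_{i=1}^n (max(|⟨xⁱ, v⟩| − ρ, 0))², and this infimum is attained. -/

import Mathlib

theorem stmt2 (n d : ℕ) (hn : 1 ≤ n) (hd : 1 ≤ d)
    (X : Matrix (Fin n) (Fin d) ℝ) (ρ : ℝ) (hρ : 0 < ρ) (v : Fin d → ℝ)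
    (hv : Real.sqrt (∑ j, v j ^ 2) = 1) :
    IsLeast {r : ℝ | ∃ E : Matrix (Fin n) (Fin d) ℝ,
        (⨆ i : Fin n, Real.sqrt (∑ j, E i j ^ 2)) ≤ ρ ∧
        r = (1 / n) * ∑ i, ((X.mulVec v + E.mulVec v) i) ^ 2}
      ((1 / n) * ∑ i, max (|∑ j, X i j * v j| - ρ) 0 ^ 2) := by
  haveI : Nonempty (Fin n) := ⟨⟨0, hn⟩⟩
  set c : Fin n → ℝ := fun i => ∑ j, X i j * v j with hc
  have hv2 : (∑ j, v j ^ 2) = 1 := by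
    have h0 : (0:ℝ) ≤ ∑ j, v j ^ 2 := Finset.sum_nonneg fun j _ => sq_nonneg _
    have := Real.sq_sqrt h0
    rw [hv] at this; linarith
  constructor
  · -- membership: construct optimal E
    refine ⟨fun i j => -(if 0 ≤ c i then (1:ℝ) else -1) * min (|c i|) ρ * v j, ?_, ?_⟩
    · apply ciSup_le
      intro i
      have hm : 0 ≤ min (|c i|) ρ := le_min (abs_nonneg _) hρ.le
      have : ∀ j, (-(if 0 ≤ c i then (1:ℝ) else -1) * min (|c i|) ρ * v j) ^ 2
          = (min (|c i|) ρ) ^ 2 * v j ^ 2 := by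
        intro j; rcases le_or_gt 0 (c i) with h | h <;> simp [h.not_gt, h] <;> ring
      rw [Finset.sum_congr rfl fun j _ => this j, ← Finset.mul_sum, hv2, mul_one,
        Real.sqrt_sq hm]
      exact min_le_right _ _
    · congr 1
      apply Finset.sum_congr rfl
      intro i _
      have hE : (Matrix.mulVec (fun i j => -(if 0 ≤ c i then (1:ℝ) else -1) * min (|c i|) ρ * v j) v) i
          = -(if 0 ≤ c i then (1:ℝ) else -1) * min (|c i|) ρ := by
        simp only [Matrix.mulVec, dotProduct]
        rw [Finset.sum_congr rfl (fun j _ => show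
            (-(if 0 ≤ c i then (1:ℝ) else -1) * min (|c i|) ρ * v j) * v j
            = (-(if 0 ≤ c i then (1:ℝ) else -1) * min (|c i|) ρ) * v j ^ 2 from by ring),
          ← Finset.mul_sum, hv2, mul_one]
      have hX : X.mulVec v i = c i := by simp [Matrix.mulVec, dotProduct, hc]
      rw [Pi.add_apply, hE, hX]
      rcases le_or_gt 0 (c i) with h | h
      · rw [if_pos h, abs_of_nonneg h]
        rcases le_or_gt (c i) ρ with h2 | h2
        · rw [min_eq_left h2, max_eq_right (by linarith)]; ring
        · rw [min_eq_right h2.le, max_eq_left (by linarith)]; ring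
      · rw [if_neg h.not_ge, abs_of_neg h]
        rcases le_or_gt (-c i) ρ with h2 | h2
        · rw [min_eq_left h2, max_eq_right (by linarith)]; ring
        · rw [min_eq_right h2.le, max_eq_left (by linarith)]; ring
  · -- lower bound
    rintro r ⟨E, hE, rfl⟩
    have hinv : (0:ℝ) ≤ 1 / n := by positivity
    apply mul_le_mul_of_nonneg_left _ hinv
    apply Finset.sum_le_sum
    intro i _
    have hrow : Real.sqrt (∑ j, E i j ^ 2) ≤ ρ :=
      le_trans (le_ciSup (f := fun i => Real.sqrt (∑ j, E i j ^ 2)) (Set.Finite.bddAbove (Set.finite_range _)) i) hE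
    have hCS : |∑ j, E i j * v j| ≤ ρ := by
      have h1 : (∑ j, E i j * v j) ^ 2 ≤ (∑ j, E i j ^ 2) * (∑ j, v j ^ 2) :=
        Finset.sum_mul_sq_le_sq_mul_sq Finset.univ _ _
      have h2 : |∑ j, E i j * v j| = Real.sqrt ((∑ j, E i j * v j) ^ 2) :=
        (Real.sqrt_sq_eq_abs _).symm
      rw [h2]
      calc Real.sqrt ((∑ j, E i j * v j) ^ 2)
          ≤ Real.sqrt ((∑ j, E i j ^ 2) * (∑ j, v j ^ 2)) := Real.sqrt_le_sqrt h1
        _ = Real.sqrt (∑ j, E i j ^ 2) * Real.sqrt (∑ j, v j ^ 2) :=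
            Real.sqrt_mul (Finset.sum_nonneg fun j _ => sq_nonneg _) _
        _ ≤ ρ := by rw [hv, mul_one]; exact hrow
    have hval : (X.mulVec v + E.mulVec v) i = c i + ∑ j, E i j * v j := by
      simp [Matrix.mulVec, dotProduct, hc]
    rw [hval]
    have hmax : max (|c i| - ρ) 0 ≤ |c i + ∑ j, E i j * v j| := by
      apply max_le _ (abs_nonneg _)
      have := abs_sub_abs_le_abs_sub (c i) (-(∑ j, E i j * v j))
      rw [abs_neg] at this
      have h3 : c i - -(∑ j, E i j * v j) = c i + ∑ j, E i j * v j := by ring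
      rw [h3] at this
      linarith
    calc max (|c i| - ρ) 0 ^ 2 ≤ |c i + ∑ j, E i j * v j| ^ 2 :=
          pow_le_pow_left₀ (le_max_right _ _) hmax 2
      _ = (c i + ∑ j, E i j * v j) ^ 2 := sq_abs _
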